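/- Let f : A → B be a homomorphism of commutative rings such that every element of the kernel of f is nilpotent, and such that for every b ∈ B there exists a positive integer n with b^n in the image of f. Then the induced map Spec(B) → Spec(A) between prime spectra, sending a prime ideal q ⊆ B to its preimage f⁻¹(q), is a homeomorphism for the Zariski topologies. -/

import Mathlib

/-- An `N`-isomorphism of commutative rings (kernel consists of nilpotent elements, and every
element of the target has some positive power in the image) induces a homeomorphism on
prime spectra with the Zariski topology. -/
theorem spec_homeomorph_of_N_isomorphism {A B : Type*} [CommRing A] [CommRing B] (f : A →+* B)
    (hker : ∀ x ∈ RingHom.ker f, IsNilpotent x)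
    (hpow : ∀ b : B, ∃ n : ℕ, 0 < n ∧ b ^ n ∈ Set.range f) :
    IsHomeomorph (PrimeSpectrum.comap f) := by
  have hint : f.IsIntegral := by
    intro b
    obtain ⟨n, hn, a, ha⟩ := hpow b
    refine ⟨Polynomial.X ^ n - Polynomial.C a, Polynomial.monic_X_pow_sub_C a hn.ne', ?_⟩
    simp [Polynomial.eval₂_sub, ha]
  rw [isHomeomorph_iff_continuous_isClosedMap_bijective]
  refine ⟨PrimeSpectrum.continuous_comap f,
    PrimeSpectrum.isClosedMap_comap_of_isIntegral f hint, ?_, ?_⟩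
  · -- injective
    intro q₁ q₂ h
    have h' : Ideal.comap f q₁.asIdeal = Ideal.comap f q₂.asIdeal :=
      congrArg PrimeSpectrum.asIdeal h
    have key : ∀ (q q' : PrimeSpectrum B),
        Ideal.comap f q.asIdeal = Ideal.comap f q'.asIdeal →
        q.asIdeal ≤ q'.asIdeal := by
      intro q q' hqq' b hb
      obtain ⟨n, hn, a, ha⟩ := hpow b
      have : a ∈ Ideal.comap f q.asIdeal := by
        simpa [Ideal.mem_comap, ha] using q.asIdeal.pow_mem_of_mem hb n hn
      rw [hqq', Ideal.mem_comap, ha] at this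
      exact q'.isPrime.mem_of_pow_mem n this
    exact PrimeSpectrum.ext (le_antisymm (key _ _ h') (key _ _ h'.symm))
  · -- surjective
    intro p
    letI : Algebra A B := f.toAlgebra
    haveI : Algebra.IsIntegral A B := ⟨hint⟩
    have hle : (⊥ : Ideal B).comap (algebraMap A B) ≤ p.asIdeal := by
      intro x hx
      have : IsNilpotent x := hker x (by simp only [Ideal.mem_comap, Ideal.mem_bot] at hx; exact hx)
      obtain ⟨n, hn⟩ := this
      exact p.isPrime.mem_of_pow_mem n (by simp [hn])
    obtain ⟨Q, -, hQ, hQ'⟩ :=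
      Ideal.exists_ideal_over_prime_of_isIntegral p.asIdeal (⊥ : Ideal B) hle
    exact ⟨⟨Q, hQ⟩, PrimeSpectrum.ext hQ'⟩
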